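/- A countable group G is left-orderable if and only if G is isomorphic to a subgroup of Homeo(I, ∂I). -/

import Mathlib

open Set

namespace Stmt

lemma negOne_mem_I : (-1 : ℝ) ∈ Set.Icc (-1 : ℝ) 1 := by norm_num
lemma one_mem_I : (1 : ℝ) ∈ Set.Icc (-1 : ℝ) 1 := by norm_num

/-- The group of homeomorphisms of `I = [-1,1]` fixing the endpoints `-1` and `1`,
realized as a subgroup of the group of bijections of `I`. -/
def HomeoI : Subgroup (Equiv.Perm (Set.Icc (-1 : ℝ) 1)) where
  carrier := {f | Continuous f ∧ Continuous f.symm ∧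
    f ⟨-1, negOne_mem_I⟩ = ⟨-1, negOne_mem_I⟩ ∧ f ⟨1, one_mem_I⟩ = ⟨1, one_mem_I⟩}
  one_mem' := ⟨continuous_id, continuous_id, rfl, rfl⟩
  mul_mem' := by
    rintro a b ⟨ha1, ha2, ha3, ha4⟩ ⟨hb1, hb2, hb3, hb4⟩
    refine ⟨ha1.comp hb1, ?_, ?_, ?_⟩
    · exact hb2.comp ha2
    · simp [Equiv.Perm.mul_apply, hb3, ha3]
    · simp [Equiv.Perm.mul_apply, hb4, ha4]
  inv_mem' := by
    rintro a ⟨ha1, ha2, ha3, ha4⟩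
    refine ⟨ha2, by exact ha1, ?_, ?_⟩
    · show a.symm _ = _
      rw [Equiv.symm_apply_eq, ha3]
    · show a.symm _ = _
      rw [Equiv.symm_apply_eq, ha4]

end Stmt

/-- A group `G` is left-orderable if there is a strict total order `<` on `G` such that
`g < h` implies `f*g < f*h` for all `f, g, h`. -/
def LeftOrderable (G : Type*) [Group G] : Prop :=
  ∃ r : G → G → Prop, IsStrictTotalOrder G r ∧ ∀ f g h : G, r g h → r (f * g) (f * h)

namespace LOProof

local instance : Fact ((-1:ℝ) ≤ 1) := ⟨by norm_num⟩

abbrev II := Set.Icc (-1:ℝ) 1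

lemma bot_def : ((⊥ : II) : ℝ) = -1 := rfl
lemma top_def : ((⊤ : II) : ℝ) = 1 := rfl

/-- every element of HomeoI is strictly monotone -/
lemma strictMono_of_mem {f : Equiv.Perm II} (hf : f ∈ Stmt.HomeoI) : StrictMono f := by
  obtain ⟨h1, _, h3, h4⟩ := hf
  refine h1.strictMono_of_inj_boundedOrder ?_ f.injective
  have hb : f ⊥ = ⊥ := by
    have : (⊥ : II) = ⟨-1, Stmt.negOne_mem_I⟩ := rfl
    rw [this, h3]
  have ht : f ⊤ = ⊤ := by
    have : (⊤ : II) = ⟨1, Stmt.one_mem_I⟩ := rfl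
    rw [this, h4]
  rw [hb, ht]; exact bot_le

theorem backward {G : Type*} [Group G] (H : Subgroup Stmt.HomeoI) (φ : G ≃* H) :
    LeftOrderable G := by
  classical
  obtain ⟨u, hu⟩ := TopologicalSpace.exists_dense_seq II
  -- F g : the permutation underlying φ g
  set F : G → Equiv.Perm II := fun g => ((φ g : Stmt.HomeoI) : Equiv.Perm II) with hF
  have Fmul : ∀ g h : G, F (g * h) = F g * F h := by
    intro g h; simp [hF, map_mul]
  have Finj : Function.Injective F := by
    intro g h hgh
    apply φ.injective
    apply Subtype.val_injective
    exact Subtype.val_injective hgh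
  have Fmem : ∀ g, F g ∈ Stmt.HomeoI := fun g => ((φ g : Stmt.HomeoI)).2
  have Fcont : ∀ g, Continuous (F g) := fun g => (Fmem g).1
  have Fsm : ∀ g, StrictMono (F g) := fun g => strictMono_of_mem (Fmem g)
  refine ⟨fun g h => ∃ n, F g (u n) < F h (u n) ∧ ∀ m < n, F g (u m) = F h (u m), ?_, ?_⟩
  · refine { trichotomous := ?_, irrefl := ?_, trans := ?_ }
    · intro g h
      rcases eq_or_ne g h with rfl | hne
      · exact fun _ _ => rfl
      · have hFne : F g ≠ F h := fun e => hne (Finj e)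
        have hex : ∃ n, F g (u n) ≠ F h (u n) := by
          by_contra hc
          push_neg at hc
          apply hFne
          apply Equiv.coe_fn_injective
          exact Continuous.ext_on hu (Fcont g) (Fcont h)
            (by rintro x ⟨n, rfl⟩; exact hc n)
        set n := Nat.find hex with hn_def
        have hn : F g (u n) ≠ F h (u n) := Nat.find_spec hex
        have hmin : ∀ m < n, F g (u m) = F h (u m) := fun m hm => by
          have := Nat.find_min hex hm; push_neg at this; exact this
        rcases lt_or_gt_of_ne hn with hlt | hgt
        · exact fun h1 _ => (h1 ⟨n, hlt, hmin⟩).elim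
        · exact fun _ h2 => (h2 ⟨n, hgt, fun m hm => (hmin m hm).symm⟩).elim
    · rintro g ⟨n, hn, -⟩; exact lt_irrefl _ hn
    · rintro g h k ⟨n, hn, hnm⟩ ⟨n', hn', hnm'⟩
      rcases lt_trichotomy n n' with hc | rfl | hc
      · exact ⟨n, hn.trans_eq (hnm' n hc), fun m hm => (hnm m hm).trans (hnm' m (hm.trans hc))⟩
      · exact ⟨n, hn.trans hn', fun m hm => (hnm m hm).trans (hnm' m hm)⟩
      · exact ⟨n', (hnm n' hc) ▸ hn', fun m hm => (hnm m (hm.trans hc)).trans (hnm' m hm)⟩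
  · rintro f g h ⟨n, hn, hnm⟩
    have key : ∀ (a : G) (x : ↑II), F (f * a) x = F f (F a x) := by
      intro a x; rw [Fmul]; rfl
    refine ⟨n, ?_, ?_⟩
    · rw [key g, key h]; exact Fsm f hn
    · intro m hm; rw [key g, key h, hnm m hm]


noncomputable section

def extFun (f : ℚ ≃o ℚ) (x : ℝ) : ℝ :=
  sSup ((fun q : ℚ => (f q : ℝ)) '' {q : ℚ | (q : ℝ) ≤ x})

lemma extS_nonempty (f : ℚ ≃o ℚ) (x : ℝ) :
    ((fun q : ℚ => (f q : ℝ)) '' {q : ℚ | (q : ℝ) ≤ x}).Nonempty := by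
  obtain ⟨q, hq⟩ := exists_rat_lt x
  exact ⟨f q, ⟨q, hq.le, rfl⟩⟩

lemma extS_bdd (f : ℚ ≃o ℚ) (x : ℝ) :
    BddAbove ((fun q : ℚ => (f q : ℝ)) '' {q : ℚ | (q : ℝ) ≤ x}) := by
  obtain ⟨p, hp⟩ := exists_rat_gt x
  refine ⟨(f p : ℝ), ?_⟩
  rintro y ⟨q, hq, rfl⟩
  have : q ≤ p := by exact_mod_cast (le_of_lt (lt_of_le_of_lt hq hp))
  show ((f _ : ℚ) : ℝ) ≤ _; exact_mod_cast f.monotone this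

lemma le_extFun {f : ℚ ≃o ℚ} {x : ℝ} {p : ℚ} (h : (p : ℝ) ≤ x) : (f p : ℝ) ≤ extFun f x :=
  le_csSup (extS_bdd f x) ⟨p, h, rfl⟩

lemma extFun_le {f : ℚ ≃o ℚ} {x : ℝ} {p : ℚ} (h : x < (p : ℝ)) : extFun f x ≤ (f p : ℝ) := by
  refine csSup_le (extS_nonempty f x) ?_
  rintro y ⟨q, hq, rfl⟩
  have : q ≤ p := by exact_mod_cast (le_of_lt (lt_of_le_of_lt hq h))
  show ((f _ : ℚ) : ℝ) ≤ _; exact_mod_cast f.monotone this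

lemma extFun_rat (f : ℚ ≃o ℚ) (q : ℚ) : extFun f (q : ℝ) = (f q : ℝ) := by
  refine le_antisymm ?_ (le_extFun le_rfl)
  refine csSup_le (extS_nonempty f _) ?_
  rintro y ⟨p, hp, rfl⟩
  have : p ≤ q := by exact_mod_cast hp
  show ((f _ : ℚ) : ℝ) ≤ _; exact_mod_cast f.monotone this

lemma extFun_strictMono (f : ℚ ≃o ℚ) : StrictMono (extFun f) := by
  intro x y hxy
  obtain ⟨p, hxp, hpy⟩ := exists_rat_btwn hxy
  obtain ⟨p', hpp', hp'y⟩ := exists_rat_btwn hpy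
  calc extFun f x ≤ (f p : ℝ) := extFun_le hxp
    _ < (f p' : ℝ) := by exact_mod_cast f.strictMono (by exact_mod_cast hpp')
    _ ≤ extFun f y := le_extFun hp'y.le

lemma extFun_leftInv (f : ℚ ≃o ℚ) (x : ℝ) : extFun f.symm (extFun f x) = x := by
  refine le_antisymm ?_ ?_
  · refine csSup_le (extS_nonempty _ _) ?_
    rintro y ⟨q, hq, rfl⟩
    by_contra hc
    push_neg at hc
    obtain ⟨p', hxp', hp'q⟩ := exists_rat_btwn hc
    have h1 : extFun f x ≤ (f p' : ℝ) := extFun_le hxp'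
    have h2 : f p' < q := by
      have : p' < f.symm q := by exact_mod_cast hp'q
      simpa using f.strictMono this
    have h3 : (q : ℝ) ≤ (f p' : ℝ) := le_trans hq h1
    exact absurd h3 (by exact_mod_cast h2.not_ge)
  · by_contra hc
    push_neg at hc
    obtain ⟨p, hp1, hp2⟩ := exists_rat_btwn hc
    have h1 : (f p : ℝ) ≤ extFun f x := le_extFun hp2.le
    have h2 : (f.symm (f p) : ℝ) ≤ extFun f.symm (extFun f x) := le_extFun h1
    rw [f.symm_apply_apply] at h2
    exact absurd (lt_of_le_of_lt h2 hp1) (lt_irrefl _)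

lemma extFun_surjective (f : ℚ ≃o ℚ) : Function.Surjective (extFun f) := fun y =>
  ⟨extFun f.symm y, by simpa using extFun_leftInv f.symm y⟩

def extIso (f : ℚ ≃o ℚ) : ℝ ≃o ℝ :=
  StrictMono.orderIsoOfSurjective _ (extFun_strictMono f) (extFun_surjective f)

lemma extIso_apply (f : ℚ ≃o ℚ) (x : ℝ) : extIso f x = extFun f x := rfl

lemma extIso_comp {f₀ f₁ f₂ : ℚ ≃o ℚ} (h : ∀ q, f₂ q = f₁ (f₀ q)) (x : ℝ) :
    extIso f₂ x = extIso f₁ (extIso f₀ x) := by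
  have hc2 : Continuous (extIso f₂ : ℝ → ℝ) := (extIso f₂).continuous
  have hc1 : Continuous ((extIso f₁ : ℝ → ℝ) ∘ (extIso f₀ : ℝ → ℝ)) :=
    (extIso f₁).continuous.comp (extIso f₀).continuous
  have := Continuous.ext_on Rat.denseRange_cast hc2 hc1 ?_
  · exact congrFun this x
  · rintro y ⟨q, rfl⟩
    show extFun f₂ q = extFun f₁ (extFun f₀ q)
    rw [extFun_rat, extFun_rat, extFun_rat, h]

def cc : ℝ ≃o Ioo (-1:ℝ) 1 := orderIsoIooNegOneOne ℝ

def JFun (F : ℝ ≃o ℝ) (x : II) : II :=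
  if h : (x : ℝ) ∈ Ioo (-1:ℝ) 1 then
    ⟨(cc (F (cc.symm ⟨x, h⟩)) : ℝ), Ioo_subset_Icc_self (cc (F (cc.symm ⟨x, h⟩))).2⟩
  else x

lemma JFun_comp {F₀ F₁ F₂ : ℝ ≃o ℝ} (h : ∀ y, F₂ y = F₁ (F₀ y)) (x : II) :
    JFun F₂ x = JFun F₁ (JFun F₀ x) := by
  by_cases hx : (x : ℝ) ∈ Ioo (-1:ℝ) 1
  · have hmem : ((⟨(cc (F₀ (cc.symm ⟨x, hx⟩)) : ℝ),
        Ioo_subset_Icc_self (cc (F₀ (cc.symm ⟨x, hx⟩))).2⟩ : II) : ℝ) ∈ Ioo (-1:ℝ) 1 :=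
      (cc (F₀ (cc.symm ⟨x, hx⟩))).2
    have e0 : JFun F₀ x = ⟨(cc (F₀ (cc.symm ⟨x, hx⟩)) : ℝ),
        Ioo_subset_Icc_self (cc (F₀ (cc.symm ⟨x, hx⟩))).2⟩ := by rw [JFun, dif_pos hx]
    rw [JFun, dif_pos hx, e0, JFun, dif_pos hmem]
    refine Subtype.ext ?_
    have e1 : (⟨_, hmem⟩ : Ioo (-1:ℝ) 1) = cc (F₀ (cc.symm ⟨x, hx⟩)) := Subtype.ext rfl
    have e2 : (cc (F₁ (cc.symm (⟨_, hmem⟩ : Ioo (-1:ℝ) 1))) : ℝ)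
        = (cc (F₁ (cc.symm (cc (F₀ (cc.symm ⟨x, hx⟩))))) : ℝ) := by rw [e1]
    show (cc (F₂ (cc.symm ⟨x, hx⟩)) : ℝ) = _
    rw [e2, cc.symm_apply_apply, ← h]
  · have e0 : JFun F₀ x = x := by rw [JFun, dif_neg hx]
    rw [JFun, dif_neg hx, e0, JFun, dif_neg hx]

lemma JFun_refl (x : II) : JFun (OrderIso.refl ℝ) x = x := by
  by_cases hx : (x : ℝ) ∈ Ioo (-1:ℝ) 1
  · rw [JFun, dif_pos hx]
    refine Subtype.ext ?_
    show (cc (OrderIso.refl ℝ (cc.symm ⟨x, hx⟩)) : ℝ) = _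
    rw [OrderIso.refl_apply, cc.apply_symm_apply]
  · rw [JFun, dif_neg hx]

lemma JFun_leftInv (F : ℝ ≃o ℝ) (x : II) : JFun F.symm (JFun F x) = x := by
  rw [← JFun_comp (F₂ := OrderIso.refl ℝ) (fun y => (F.symm_apply_apply y).symm) x, JFun_refl]

def JEquiv (F : ℝ ≃o ℝ) : Equiv.Perm II where
  toFun := JFun F
  invFun := JFun F.symm
  left_inv := JFun_leftInv F
  right_inv := fun x => by
    have := JFun_leftInv F.symm x
    rwa [F.symm_symm] at this

lemma not_mem_Ioo_cases {x : II} (hx : ¬ (x : ℝ) ∈ Ioo (-1:ℝ) 1) :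
    (x : ℝ) = -1 ∨ (x : ℝ) = 1 := by
  rcases eq_or_lt_of_le x.2.1 with h | h
  · exact Or.inl h.symm
  · refine Or.inr (le_antisymm x.2.2 ?_)
    by_contra hc
    push_neg at hc
    exact hx ⟨h, hc⟩

lemma JFun_strictMono (F : ℝ ≃o ℝ) : StrictMono (JFun F) := by
  intro x y hxy
  have hxy' : (x : ℝ) < (y : ℝ) := hxy
  by_cases hx : (x : ℝ) ∈ Ioo (-1:ℝ) 1 <;> by_cases hy : (y : ℝ) ∈ Ioo (-1:ℝ) 1
  · rw [JFun, dif_pos hx, JFun, dif_pos hy]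
    have : (⟨(x:ℝ), hx⟩ : Ioo (-1:ℝ) 1) < ⟨(y:ℝ), hy⟩ := hxy'
    exact Subtype.mk_lt_mk.2 (cc.strictMono (F.strictMono (cc.symm.strictMono this)))
  · -- y endpoint : y = 1
    have hy1 : (y : ℝ) = 1 := by
      rcases not_mem_Ioo_cases hy with h | h
      · exact absurd (h ▸ hxy') (not_lt.2 x.2.1)
      · exact h
    rw [JFun, dif_pos hx, JFun, dif_neg hy]
    show (cc (F (cc.symm ⟨x, hx⟩)) : ℝ) < (y : ℝ)
    rw [hy1]; exact (cc _).2.2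
  · -- x endpoint : x = -1
    have hx1 : (x : ℝ) = -1 := by
      rcases not_mem_Ioo_cases hx with h | h
      · exact h
      · exact absurd (h ▸ hxy') (not_lt.2 y.2.2)
    rw [JFun, dif_neg hx, JFun, dif_pos hy]
    show (x : ℝ) < (cc (F (cc.symm ⟨y, hy⟩)) : ℝ)
    rw [hx1]; exact (cc _).2.1
  · rcases not_mem_Ioo_cases hx with h | h
    · have hy1 : (y : ℝ) = 1 := by
        rcases not_mem_Ioo_cases hy with h' | h'
        · exact absurd (h' ▸ h ▸ hxy') (lt_irrefl _)
        · exact h'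
      rw [JFun, dif_neg hx, JFun, dif_neg hy]
      exact hxy
    · exact absurd (h ▸ hxy') (not_lt.2 y.2.2)

def JIso (F : ℝ ≃o ℝ) : II ≃o II :=
  StrictMono.orderIsoOfSurjective _ (JFun_strictMono F) (JEquiv F).surjective

lemma JFun_continuous (F : ℝ ≃o ℝ) : Continuous (JFun F) := (JIso F).continuous

lemma JFun_negOne (F : ℝ ≃o ℝ) : JFun F ⟨-1, by norm_num⟩ = ⟨-1, by norm_num⟩ := by
  rw [JFun, dif_neg]; simp

lemma JFun_one (F : ℝ ≃o ℝ) : JFun F ⟨1, by norm_num⟩ = ⟨1, by norm_num⟩ := by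
  rw [JFun, dif_neg]; simp


set_option linter.unusedSectionVars false

section LexPart
variable {G : Type*} [Group G] [LinearOrder G]

lemma lex_mul_lt (hinv : ∀ f a b : G, a < b → f * a < f * b) (g : G) {a b : G} :
    g * a < g * b ↔ a < b :=
  ⟨fun h => by simpa using hinv g⁻¹ _ _ h, hinv g a b⟩

def lexMul (hinv : ∀ f a b : G, a < b → f * a < f * b) (g : G) :
    Lex (G × ℚ) ≃o Lex (G × ℚ) where
  toFun a := toLex (g * (ofLex a).1, (ofLex a).2)
  invFun a := toLex (g⁻¹ * (ofLex a).1, (ofLex a).2)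
  left_inv a := by simp
  right_inv a := by simp
  map_rel_iff' {a b} := by
    show toLex (g * (ofLex a).1, (ofLex a).2) ≤ toLex (g * (ofLex b).1, (ofLex b).2) ↔ a ≤ b
    conv_rhs => rw [← toLex_ofLex a, ← toLex_ofLex b]
    rw [Prod.Lex.le_iff, Prod.Lex.le_iff]
    simp only [ofLex_toLex, lex_mul_lt hinv g, mul_right_inj]

lemma lexMul_assoc (hinv : ∀ f a b : G, a < b → f * a < f * b) (g h : G)
    (a : Lex (G × ℚ)) : lexMul hinv (g * h) a = lexMul hinv g (lexMul hinv h a) := by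
  simp [lexMul, mul_assoc]

lemma lexQ_dense : DenselyOrdered (Lex (G × ℚ)) := by
  constructor
  intro a b hab
  rw [← toLex_ofLex a, ← toLex_ofLex b, Prod.Lex.lt_iff] at hab
  rcases hab with h | ⟨h1, h2⟩
  · refine ⟨toLex ((ofLex a).1, (ofLex a).2 + 1), ?_, ?_⟩
    · rw [← toLex_ofLex a, Prod.Lex.lt_iff]
      exact Or.inr ⟨rfl, lt_add_one _⟩
    · rw [← toLex_ofLex b, Prod.Lex.lt_iff]
      exact Or.inl h
  · obtain ⟨q, hq1, hq2⟩ := exists_between h2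
    refine ⟨toLex ((ofLex a).1, q), ?_, ?_⟩
    · rw [← toLex_ofLex a, Prod.Lex.lt_iff]
      exact Or.inr ⟨rfl, hq1⟩
    · rw [← toLex_ofLex b, Prod.Lex.lt_iff]
      exact Or.inr ⟨h1, hq2⟩

lemma lexQ_noMax : NoMaxOrder (Lex (G × ℚ)) := by
  constructor
  intro a
  refine ⟨toLex ((ofLex a).1, (ofLex a).2 + 1), ?_⟩
  rw [← toLex_ofLex a, Prod.Lex.lt_iff]
  exact Or.inr ⟨rfl, lt_add_one _⟩

lemma lexQ_noMin : NoMinOrder (Lex (G × ℚ)) := by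
  constructor
  intro a
  refine ⟨toLex ((ofLex a).1, (ofLex a).2 - 1), ?_⟩
  rw [← toLex_ofLex a, Prod.Lex.lt_iff]
  exact Or.inr ⟨rfl, sub_one_lt _⟩

end LexPart

theorem forward {G : Type*} [Group G] [Countable G] (hG : LeftOrderable G) :
    ∃ H : Subgroup Stmt.HomeoI, Nonempty (G ≃* H) := by
  classical
  obtain ⟨r, hsto, hinvr⟩ := hG
  haveI : IsStrictTotalOrder G r := hsto
  letI : LinearOrder G := linearOrderOfSTO r
  have hinv : ∀ f a b : G, a < b → f * a < f * b := hinvr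
  haveI : DenselyOrdered (Lex (G × ℚ)) := lexQ_dense
  haveI : NoMaxOrder (Lex (G × ℚ)) := lexQ_noMax
  haveI : NoMinOrder (Lex (G × ℚ)) := lexQ_noMin
  haveI : Countable (Lex (G × ℚ)) := inferInstanceAs (Countable (G × ℚ))
  haveI : Nonempty (Lex (G × ℚ)) := ⟨toLex (1, 0)⟩
  obtain ⟨e⟩ : Nonempty (Lex (G × ℚ) ≃o ℚ) := Order.iso_of_countable_dense _ _
  -- the rational realization of left multiplication
  set ℓ : G → (ℚ ≃o ℚ) := fun g => (e.symm.trans ((lexMul hinv g).trans e)) with hℓ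
  have ℓ_mul : ∀ (g h : G) (q : ℚ), ℓ (g * h) q = ℓ g (ℓ h q) := by
    intro g h q
    simp only [hℓ, OrderIso.trans_apply, e.symm_apply_apply]
    rw [lexMul_assoc]
  -- the group homomorphism into HomeoI
  have memJ : ∀ g : G, JEquiv (extIso (ℓ g)) ∈ Stmt.HomeoI := by
    intro g
    refine ⟨?_, ?_, ?_, ?_⟩
    · exact JFun_continuous _
    · show Continuous (JFun (extIso (ℓ g)).symm)
      exact JFun_continuous _
    · exact JFun_negOne _
    · exact JFun_one _
  set ρ₀ : G → Stmt.HomeoI := fun g => ⟨JEquiv (extIso (ℓ g)), memJ g⟩ with hρ₀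
  have hmul : ∀ g h : G, ρ₀ (g * h) = ρ₀ g * ρ₀ h := by
    intro g h
    refine Subtype.ext (Equiv.ext fun x => ?_)
    show JFun (extIso (ℓ (g * h))) x = JFun (extIso (ℓ g)) (JFun (extIso (ℓ h)) x)
    refine JFun_comp (fun y => ?_) x
    exact extIso_comp (ℓ_mul g h) y
  set ρ : G →* Stmt.HomeoI := MonoidHom.mk' ρ₀ hmul with hρ
  have hinj : Function.Injective ρ := by
    rw [injective_iff_map_eq_one]
    intro g hg
    have hval : ∀ x : II, JFun (extIso (ℓ g)) x = x := by
      intro x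
      have := congrArg (fun z : Stmt.HomeoI => (z : Equiv.Perm II) x) hg
      exact this
    have hF : ∀ y : ℝ, extIso (ℓ g) y = y := by
      intro y
      have hx : ((⟨(cc y : ℝ), Ioo_subset_Icc_self (cc y).2⟩ : II) : ℝ) ∈ Ioo (-1:ℝ) 1 :=
        (cc y).2
      have h0 := hval ⟨(cc y : ℝ), Ioo_subset_Icc_self (cc y).2⟩
      rw [JFun, dif_pos hx, Subtype.mk.injEq] at h0
      have hzz : (⟨_, hx⟩ : Ioo (-1:ℝ) 1) = cc y := Subtype.ext rfl
      rw [hzz, cc.symm_apply_apply] at h0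
      exact cc.injective (Subtype.ext h0)
    have hq : ∀ q : ℚ, ℓ g q = q := by
      intro q
      have h1 := hF (q : ℝ)
      rw [extIso_apply, extFun_rat] at h1
      exact_mod_cast h1
    have hlex : ∀ a : Lex (G × ℚ), lexMul hinv g a = a := by
      intro a
      have h1 := hq (e a)
      simp only [hℓ, OrderIso.trans_apply, e.symm_apply_apply] at h1
      exact e.injective h1
    have h1 := hlex (toLex (1, 0))
    have h2 : ((g * 1 : G), (0 : ℚ)) = ((1 : G), (0 : ℚ)) := congrArg ofLex h1
    simpa using congrArg Prod.fst h2
  exact ⟨ρ.range, ⟨MonoidHom.ofInjective hinj⟩⟩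

end
end LOProof

/-- A countable group is left-orderable if and only if it is isomorphic to a subgroup of
the group of homeomorphisms of `[-1,1]` fixing the endpoints. -/
theorem leftOrderable_iff_subgroup_homeoI (G : Type*) [Group G] [Countable G] :
    LeftOrderable G ↔ ∃ H : Subgroup Stmt.HomeoI, Nonempty (G ≃* H) := by
  constructor
  · exact LOProof.forward
  · rintro ⟨H, ⟨φ⟩⟩
    exact LOProof.backward H φ
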